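/- Let σ be a relational vocabulary, 𝒜 and ℬ finite σ-structures, and k ≥ 1. Then the following are equivalent: (1) for every finite σ-structure 𝒞 with td(𝒞) ≤ k, the existence of a homomorphism 𝒞 → 𝒜 implies the existence of a homomorphism 𝒞 → ℬ; (2) there exists a homomorphism E_k 𝒜 → ℬ. -/

import Mathlib

/-- A relational vocabulary: a type of relation symbols with arities. -/
structure RelVocab : Type 1 where
  Rel : Type
  ar : Rel → ℕ

/-- A structure for a relational vocabulary. -/
structure RelStruct (σ : RelVocab) : Type 1 where
  carrier : Type
  rel : ∀ R : σ.Rel, (Fin (σ.ar R) → carrier) → Prop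

/-- Homomorphisms of relational structures. -/
def IsHom {σ : RelVocab} (𝒜 ℬ : RelStruct σ) (h : 𝒜.carrier → ℬ.carrier) : Prop :=
  ∀ (R : σ.Rel) (v : Fin (σ.ar R) → 𝒜.carrier), 𝒜.rel R v → ℬ.rel R (fun i => h (v i))

/-- Nonempty sequences over `A` of length at most `k`: the universe of `E_k 𝒜`. -/
def EkC (k : ℕ) (A : Type) : Type :=
  {l : List A // l ≠ [] ∧ l.length ≤ k}

/-- The counit: the last element of a sequence. -/
def eps {k : ℕ} {A : Type} (s : EkC k A) : A :=
  s.1.getLast s.2.1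

/-- Comparability in the prefix order. -/
def Cmp {A : Type} (s t : List A) : Prop :=
  s <+: t ∨ t <+: s

/-- The Ehrenfeucht–Fraïssé comonad `E_k` on structures. -/
def Ek {σ : RelVocab} (k : ℕ) (𝒜 : RelStruct σ) : RelStruct σ where
  carrier := EkC k 𝒜.carrier
  rel R v := (∀ i j, Cmp (v i).1 (v j).1) ∧ 𝒜.rel R (fun i => eps (v i))

/-- The prefix of `s` of length `i+1`. -/
def prefAt {k : ℕ} {A : Type} (s : EkC k A) (i : Fin s.1.length) : EkC k A :=
  ⟨s.1.take (i + 1), by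
    constructor
    · apply List.ne_nil_of_length_pos
      rw [List.length_take]
      exact lt_min (Nat.succ_pos _) (Nat.lt_of_le_of_lt (Nat.zero_le _) i.2)
    · rw [List.length_take]
      exact le_trans (min_le_right _ _) s.2.2⟩

/-- The Kleisli coextension `f* [a_1,…,a_j] = [f[a_1],…,f[a_1,…,a_j]]`. -/
def coext {k : ℕ} {A B : Type} (f : EkC k A → B) (s : EkC k A) : EkC k B :=
  ⟨List.ofFn (fun i : Fin s.1.length => f (prefAt s i)), by
    constructor
    · apply List.ne_nil_of_length_pos
      rw [List.length_ofFn]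
      exact List.length_pos_iff.mpr s.2.1
    · rw [List.length_ofFn]
      exact s.2.2⟩

/-- The adjacency relation of the Gaifman graph of `𝒜`. -/
def gaif {σ : RelVocab} (𝒜 : RelStruct σ) (a a' : 𝒜.carrier) : Prop :=
  a ≠ a' ∧ ∃ (R : σ.Rel) (v : Fin (σ.ar R) → 𝒜.carrier),
    𝒜.rel R v ∧ (∃ i, v i = a) ∧ (∃ j, v j = a')

/-- A forest cover, with universe `V`, of the graph `(V, adj)`, of height at most `k`:
a partial order on `V` whose predecessor sets are finite chains, in which adjacent
vertices are comparable, and in which every chain has at most `k` elements. -/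
structure ForestCoverOn (V : Type) (adj : V → V → Prop) (k : ℕ) where
  le : V → V → Prop
  refl : ∀ a, le a a
  antisymm : ∀ a b, le a b → le b a → a = b
  trans : ∀ a b c, le a b → le b c → le a c
  pred_finite : ∀ a, {b | le b a}.Finite
  pred_chain : ∀ a, IsChain le {b | le b a}
  cover : ∀ a a', adj a a' → le a a' ∨ le a' a
  height : ∀ C : Finset V, IsChain le ↑C → C.card ≤ k


/-- In a sorted list, every element is the last element or related to it. -/
lemma rel_getLast {α : Type} (r : α → α → Prop) (l : List α) :
    ∀ (h : l ≠ []), l.Pairwise r → ∀ x ∈ l, x = l.getLast h ∨ r x (l.getLast h) := by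
  induction l with
  | nil => intro h; exact absurd rfl h
  | cons a t ih =>
    intro h hs x hx
    rcases List.mem_cons.mp hx with rfl | hxt
    · cases t with
      | nil => left; rfl
      | cons b t' =>
        right
        rw [List.getLast_cons (by simp)]
        exact (List.pairwise_cons.mp hs).1 _ (List.getLast_mem _)
    · have ht : t ≠ [] := List.ne_nil_of_mem hxt
      rw [List.getLast_cons ht]
      exact ih ht (List.pairwise_cons.mp hs).2 x hxt

/-- A sorted sublist that sits entirely below the extra elements is a prefix. -/
lemma sorted_prefix_aux {α : Type} (r : α → α → Prop)
    (hanti : ∀ a b, r a b → r b a → a = b) (l₂ : List α) :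
    ∀ l₁ : List α, l₁.Pairwise r → l₂.Pairwise r → l₁.Nodup → l₂.Nodup →
      (∀ x ∈ l₁, x ∈ l₂) → (∀ x ∈ l₂, x ∉ l₁ → ∀ y ∈ l₁, r y x) → l₁ <+: l₂ := by
  induction l₂ with
  | nil =>
    intro l₁ _ _ _ _ hsub _
    cases l₁ with
    | nil => exact List.nil_prefix
    | cons a t => exact absurd (hsub a (by simp)) (by simp)
  | cons b t₂ ih =>
    intro l₁ hs₁ hs₂ hn₁ hn₂ hsub hlow
    cases l₁ with
    | nil => exact List.nil_prefix
    | cons a t₁ =>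
      have hab : a = b := by
        by_contra hne
        have hat₂ : a ∈ t₂ := by
          rcases List.mem_cons.mp (hsub a (by simp)) with h | h
          · exact absurd h hne
          · exact h
        have hba : r b a := (List.pairwise_cons.mp hs₂).1 a hat₂
        have hab' : r a b := by
          by_cases hbl : b ∈ a :: t₁
          · rcases List.mem_cons.mp hbl with h | h
            · exact absurd h.symm hne
            · exact (List.pairwise_cons.mp hs₁).1 b h
          · exact hlow b (by simp) hbl a (by simp)
        exact hne (hanti a b hab' hba)
      subst hab
      have hprefix : t₁ <+: t₂ := by
        apply ih t₁ (List.pairwise_cons.mp hs₁).2 (List.pairwise_cons.mp hs₂).2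
          (List.nodup_cons.mp hn₁).2 (List.nodup_cons.mp hn₂).2
        · intro x hx
          rcases List.mem_cons.mp (hsub x (List.mem_cons_of_mem a hx)) with h | h
          · exact absurd (h ▸ hx) (List.nodup_cons.mp hn₁).1
          · exact h
        · intro x hx hnx y hy
          have hxa : x ≠ a := by
            rintro rfl
            exact (List.nodup_cons.mp hn₂).1 hx
          exact hlow x (List.mem_cons_of_mem a hx)
            (by simp [hxa, hnx]) y (List.mem_cons_of_mem a hy)
      exact List.cons_prefix_cons.mpr ⟨rfl, hprefix⟩

/-- `𝒜 →_k^E ℬ` iff `E_k 𝒜 → ℬ`: every finite structure of tree-depth at most `k`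
(i.e. admitting a forest cover of its Gaifman graph of height at most `k`) mapping into
`𝒜` also maps into `ℬ`, iff there is a homomorphism `E_k 𝒜 → ℬ`. -/
theorem stmt16 (σ : RelVocab) (𝒜 ℬ : RelStruct σ)
    (hA : Finite 𝒜.carrier) (hB : Finite ℬ.carrier) (k : ℕ) (hk : 1 ≤ k) :
    (∀ 𝒞 : RelStruct σ, Finite 𝒞.carrier →
      Nonempty (ForestCoverOn 𝒞.carrier (gaif 𝒞) k) →
      (∃ h : 𝒞.carrier → 𝒜.carrier, IsHom 𝒞 𝒜 h) →
      (∃ h : 𝒞.carrier → ℬ.carrier, IsHom 𝒞 ℬ h)) ↔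
    (∃ h : EkC k 𝒜.carrier → ℬ.carrier, IsHom (Ek k 𝒜) ℬ h) := by
  constructor
  · intro H
    haveI hfin : Finite (EkC k 𝒜.carrier) := by
      have h1 : {l : List 𝒜.carrier | l.length ≤ k}.Finite := List.finite_length_le _ k
      have h2 : {l : List 𝒜.carrier | l ≠ [] ∧ l.length ≤ k}.Finite :=
        h1.subset fun l hl => hl.2
      exact h2.to_subtype
    haveI hfin2 : Finite (Ek k 𝒜).carrier := hfin
    refine H (Ek k 𝒜) hfin ⟨?_⟩ ⟨eps, fun R v hv => hv.2⟩
    exact {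
      le := fun s t => s.1 <+: t.1
      refl := fun a => List.prefix_refl _
      antisymm := fun a b h1 h2 =>
        Subtype.ext (h1.eq_of_length (le_antisymm h1.length_le h2.length_le))
      trans := fun a b c h1 h2 => h1.trans h2
      pred_finite := fun a => Set.toFinite _
      pred_chain := fun a x hx y hy hne => List.prefix_or_prefix_of_prefix hx hy
      cover := fun a a' hadj => by
        obtain ⟨hne, R, v, hv, ⟨i, hi⟩, ⟨j, hj⟩⟩ := hadj
        have := hv.1 i j
        rw [hi, hj] at this
        exact this
      height := fun C hC => by
        have hcard : C.card ≤ (Finset.Icc 1 k).card := by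
          apply Finset.card_le_card_of_injOn (fun x => x.1.length)
          · intro x hx
            simp only [Finset.mem_coe, Finset.mem_Icc]
            exact ⟨List.length_pos_iff.mpr x.2.1, x.2.2⟩
          · intro x hx y hy hxy
            by_cases hxyeq : x = y
            · exact hxyeq
            · rcases hC hx hy hxyeq with h | h
              · exact Subtype.ext (h.eq_of_length hxy)
              · exact (Subtype.ext (h.eq_of_length hxy.symm)).symm
        rwa [Nat.card_Icc, Nat.add_sub_cancel] at hcard }
  · rintro ⟨h, hhom⟩ 𝒞 hCfin ⟨F⟩ ⟨g, hg⟩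
    classical
    haveI : IsPartialOrder 𝒞.carrier F.le :=
      { refl := F.refl, trans := F.trans, antisymm := F.antisymm }
    obtain ⟨s, hlin, hrs⟩ := extend_partialOrder F.le
    haveI := hlin
    haveI : DecidableRel s := Classical.decRel s
    set P : 𝒞.carrier → Finset 𝒞.carrier := fun c => (F.pred_finite c).toFinset with hP
    set L : 𝒞.carrier → List 𝒞.carrier := fun c => (P c).sort s with hL
    have memL : ∀ b c, b ∈ L c ↔ F.le b c := by
      intro b c
      rw [hL]
      simp only [Finset.mem_sort, hP, Set.Finite.mem_toFinset]
      rfl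
    have Lne : ∀ c, L c ≠ [] := fun c =>
      List.ne_nil_of_mem ((memL c c).mpr (F.refl c))
    have Llen : ∀ c, (L c).length ≤ k := by
      intro c
      rw [hL, Finset.length_sort]
      apply F.height
      rw [hP]
      simp only [Set.Finite.coe_toFinset]
      exact F.pred_chain c
    have santi : ∀ a b, s a b → s b a → a = b := fun a b h1 h2 => antisymm h1 h2
    have LgetLast : ∀ c (hc : L c ≠ []), (L c).getLast hc = c := by
      intro c hc
      have hmem : c ∈ L c := (memL c c).mpr (F.refl c)
      have hlast : (L c).getLast hc ∈ L c := List.getLast_mem hc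
      have h1 : s ((L c).getLast hc) c := hrs _ _ ((memL _ c).mp hlast)
      rcases rel_getLast s (L c) hc (Finset.pairwise_sort (P c) s) c hmem with he | hr
      · exact he.symm
      · exact santi _ _ h1 hr
    have Lpre : ∀ c c', F.le c c' → L c <+: L c' := by
      intro c c' hcc'
      apply sorted_prefix_aux s santi (L c') (L c) (Finset.pairwise_sort (P c) s)
        (Finset.pairwise_sort (P c') s) (Finset.sort_nodup (P c) s) (Finset.sort_nodup (P c') s)
      · intro x hx
        exact (memL x c').mpr (F.trans _ _ _ ((memL x c).mp hx) hcc')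
      · intro x hx hnx y hy
        have hxc' : F.le x c' := (memL x c').mp hx
        have hyc : F.le y c := (memL y c).mp hy
        have hxc : ¬ F.le x c := fun hle => hnx ((memL x c).mpr hle)
        have hxnec : x ≠ c := fun he => hxc (he ▸ F.refl c)
        have hcx : F.le c x := by
          rcases F.pred_chain c' hxc' (Set.mem_setOf.mpr hcc') hxnec with h1 | h1
          · exact absurd h1 hxc
          · exact h1
        exact hrs _ _ (F.trans _ _ _ hyc hcx)
    have Mne : ∀ c, (L c).map g ≠ [] := fun c hc =>
      Lne c (List.map_eq_nil_iff.mp hc)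
    have Mlen : ∀ c, ((L c).map g).length ≤ k := fun c => by
      rw [List.length_map]; exact Llen c
    set M : 𝒞.carrier → EkC k 𝒜.carrier := fun c => ⟨(L c).map g, Mne c, Mlen c⟩ with hM
    have epsM : ∀ c, eps (M c) = g c := by
      intro c
      show ((L c).map g).getLast _ = g c
      rw [List.getLast_map]
      exact congrArg g (LgetLast c _)
    refine ⟨fun c => h (M c), ?_⟩
    intro R v hv
    have hek : (Ek k 𝒜).rel R (fun i => M (v i)) := by
      constructor
      · intro i j
        by_cases hij : v i = v j
        · show Cmp (M (v i)).1 (M (v j)).1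
          rw [hij]; exact Or.inl (List.prefix_refl _)
        · have hadj : gaif 𝒞 (v i) (v j) :=
            ⟨hij, R, v, hv, ⟨i, rfl⟩, ⟨j, rfl⟩⟩
          rcases F.cover _ _ hadj with hle | hle
          · exact Or.inl ((Lpre _ _ hle).map g)
          · exact Or.inr ((Lpre _ _ hle).map g)
      · have : (fun i => eps (M (v i))) = fun i => g (v i) := funext fun i => epsM (v i)
        rw [this]
        exact hg R v hv
    exact hhom R (fun i => M (v i)) hek
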